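/- Let A be a real m×n matrix with columns F₁,…,Fₙ and Moore–Penrose pseudoinverse A⁺. Let c ∈ ℝᵐ be a vector that does not lie in the column space of A, let b ∈ ℝᵐ lie in the column space of A, and let j be a column index such that the row vector v = e_jᵀ·(Iₙ − A⁺·A) is nonzero (i.e., column F_j participates in a dependence relation). Let B⁺ be a Moore–Penrose pseudoinverse of the perturbed matrix à = A + c·e_jᵀ, and set x = A⁺·b and x̃ = B⁺·b. If τ is a span-separated subset of column indices (span{F_k : k ∈ τ} ∩ span{F_i : i ∉ τ} = {0}) with j ∈ τ, then for every index i ∉ τ one has x_i = x̃_i. -/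

import Mathlib

open Matrix

/-- A matrix times a vector supported on `S` lies in the span of the columns
indexed by `S`. -/
lemma mulVec_mem_span_cols {m n : ℕ} (A : Matrix (Fin m) (Fin n) ℝ)
    (S : Set (Fin n)) (z : Fin n → ℝ) (hz : ∀ i, i ∉ S → z i = 0) :
    A.mulVec z ∈ Submodule.span ℝ (Aᵀ '' S) := by
  have hrep : A.mulVec z = ∑ k : Fin n, z k • Aᵀ k := by
    ext i
    simp [Matrix.mulVec, dotProduct, Finset.sum_apply, Matrix.transpose_apply,
      mul_comm]
  rw [hrep]
  refine Submodule.sum_mem _ (fun k _ => ?_)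
  by_cases hk : k ∈ S
  · exact Submodule.smul_mem _ _ (Submodule.subset_span ⟨k, hk, rfl⟩)
  · simp [hz k hk]

/-- The minimum-norm least squares solution is orthogonal to the kernel. -/
lemma pinv_mulVec_perp_ker {m n : ℕ} (A : Matrix (Fin m) (Fin n) ℝ)
    (Ap : Matrix (Fin n) (Fin m) ℝ)
    (h2 : Ap * A * Ap = Ap) (h4 : (Ap * A)ᵀ = Ap * A)
    (b : Fin m → ℝ) (u : Fin n → ℝ) (hu : A.mulVec u = 0) :
    Ap.mulVec b ⬝ᵥ u = 0 := by
  have hfix : Ap.mulVec b = (Ap * A).mulVec (Ap.mulVec b) := by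
    rw [Matrix.mulVec_mulVec, h2]
  rw [hfix, ← Matrix.vecMul_transpose, h4]
  rw [← Matrix.dotProduct_mulVec, Matrix.mulVec_mulVec] at *
  rw [← Matrix.mulVec_mulVec, hu]
  simp

/-- Perturbing a column `F_j` of `A` by a vector `c` outside the column space
of `A` does not change the components of the minimum-norm least-squares
solution corresponding to columns outside any span-separated set `τ`
containing `j`. -/
theorem perturbation_fixes_solution_outside_cluster
    {m n : ℕ} (A : Matrix (Fin m) (Fin n) ℝ) (Ap : Matrix (Fin n) (Fin m) ℝ)
    (h1 : A * Ap * A = A) (h2 : Ap * A * Ap = Ap)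
    (h3 : (A * Ap)ᵀ = A * Ap) (h4 : (Ap * A)ᵀ = Ap * A)
    (c : Fin m → ℝ) (hc : c ∉ LinearMap.range A.mulVecLin)
    (b : Fin m → ℝ) (hb : b ∈ LinearMap.range A.mulVecLin)
    (j : Fin n)
    (hv : ((1 : Matrix (Fin n) (Fin n) ℝ) - Ap * A) j ≠ 0)
    (Bp : Matrix (Fin n) (Fin m) ℝ)
    (hb1 : (A + vecMulVec c (Pi.single j 1)) * Bp * (A + vecMulVec c (Pi.single j 1))
        = A + vecMulVec c (Pi.single j 1))
    (hb2 : Bp * (A + vecMulVec c (Pi.single j 1)) * Bp = Bp)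
    (hb3 : ((A + vecMulVec c (Pi.single j 1)) * Bp)ᵀ = (A + vecMulVec c (Pi.single j 1)) * Bp)
    (hb4 : (Bp * (A + vecMulVec c (Pi.single j 1)))ᵀ = Bp * (A + vecMulVec c (Pi.single j 1)))
    (x x' : Fin n → ℝ) (hx : x = Ap.mulVec b) (hx' : x' = Bp.mulVec b)
    (τ : Set (Fin n)) (hjτ : j ∈ τ)
    (hsep : Submodule.span ℝ (Aᵀ '' τ) ⊓ Submodule.span ℝ (Aᵀ '' τᶜ) = ⊥) :
    ∀ i ∉ τ, x i = x' i := by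
  classical
  set M : Matrix (Fin m) (Fin n) ℝ := A + vecMulVec c (Pi.single j 1) with hM
  -- mulVec of the perturbed matrix
  have hMv : ∀ z : Fin n → ℝ, M.mulVec z = A.mulVec z + z j • c := by
    intro z
    rw [hM, Matrix.add_mulVec]
    congr 1
    ext i
    simp [Matrix.mulVec, dotProduct, Matrix.vecMulVec_apply, Pi.single_apply,
      ite_mul, mul_ite, mul_comm]
  obtain ⟨y, hy⟩ := hb
  rw [Matrix.mulVecLin_apply] at hy
  -- the projector onto the kernel
  set P : Matrix (Fin n) (Fin n) ℝ := 1 - Ap * A with hP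
  have hPsym : Pᵀ = P := by rw [hP, Matrix.transpose_sub, Matrix.transpose_one, h4]
  have hQQ : (Ap * A) * (Ap * A) = Ap * A := by
    rw [← Matrix.mul_assoc, h2]
  have hPP : P * P = P := by
    have h : P * P = 1 - Ap * A - Ap * A + (Ap * A) * (Ap * A) := by
      rw [hP]; noncomm_ring
    rw [h, hQQ, hP]; noncomm_ring
  set w0 : Fin n → ℝ := P.mulVec (Pi.single j 1) with hw0
  have hw0row : ∀ k, w0 k = P j k := by
    intro k
    have h1' : w0 k = P k j := by
      simp [hw0, Matrix.mulVec, dotProduct, Pi.single_apply]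
    have h2' : P k j = Pᵀ j k := rfl
    rw [h1', h2', hPsym]
  have hw0ne : w0 ≠ 0 := by
    intro h
    apply hv
    ext k
    have := congrFun h k
    rw [hw0row k] at this
    simpa [hP] using this
  have hw0j : w0 j = ∑ k, w0 k * w0 k := by
    have h : P j j = (P * P) j j := by rw [hPP]
    rw [hw0row j, h, Matrix.mul_apply]
    refine Finset.sum_congr rfl (fun k _ => ?_)
    rw [hw0row k]
    have h' : P k j = Pᵀ j k := rfl
    rw [h', hPsym]
  have hw0jne : w0 j ≠ 0 := by
    obtain ⟨k, hk⟩ : ∃ k, w0 k ≠ 0 := by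
      by_contra h
      push_neg at h
      exact hw0ne (funext h)
    have hpos : 0 < ∑ k, w0 k * w0 k :=
      Finset.sum_pos' (fun i _ => mul_self_nonneg _)
        ⟨k, Finset.mem_univ k, mul_self_pos.mpr hk⟩
    rw [hw0j]; exact ne_of_gt hpos
  have hAw0 : A.mulVec w0 = 0 := by
    rw [hw0, Matrix.mulVec_mulVec]
    have h : A * P = 0 := by
      rw [hP, Matrix.mul_sub, Matrix.mul_one, ← Matrix.mul_assoc, h1, sub_self]
    rw [h, Matrix.zero_mulVec]
  -- a preimage of b with zero j-th coordinate
  set z : Fin n → ℝ := y - (y j / w0 j) • w0 with hz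
  have hAz : A.mulVec z = b := by
    rw [hz, Matrix.mulVec_sub, Matrix.mulVec_smul, hAw0, hy]
    simp
  have hzj : z j = 0 := by
    simp only [hz, Pi.sub_apply, Pi.smul_apply, smul_eq_mul]
    field_simp
    simp
  have hMz : M.mulVec z = b := by rw [hMv z, hzj, hAz]; simp
  -- M *ᵥ x' = b
  have hMx' : M.mulVec x' = b := by
    rw [hx', ← hMz, Matrix.mulVec_mulVec, Matrix.mulVec_mulVec, hb1, hMz]
  have hkey : A.mulVec x' + x' j • c = b := by rw [← hMv x', hMx']
  have hsub : A.mulVec (y - x') = x' j • c := by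
    rw [Matrix.mulVec_sub, hy, ← hkey]; abel
  have hx'j : x' j = 0 := by
    by_contra h
    apply hc
    refine ⟨(x' j)⁻¹ • (y - x'), ?_⟩
    rw [Matrix.mulVecLin_apply, Matrix.mulVec_smul, hsub, smul_smul,
      inv_mul_cancel₀ h, one_smul]
  have hAx' : A.mulVec x' = b := by
    rw [hx'j] at hkey; simpa using hkey
  have hAx : A.mulVec x = b := by
    rw [hx, ← hy, Matrix.mulVec_mulVec, Matrix.mulVec_mulVec, h1]
  -- the difference lies in the kernel of A
  have hAd : A.mulVec (x' - x) = 0 := by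
    rw [Matrix.mulVec_sub, hAx, hAx', sub_self]
  -- split the difference along τ
  set dc : Fin n → ℝ := fun i => if i ∈ τ then 0 else (x' - x) i with hdc
  set dt : Fin n → ℝ := fun i => if i ∈ τ then (x' - x) i else 0 with hdt
  have hsplit : (x' - x) = dt + dc := by
    ext i
    by_cases hi : i ∈ τ <;> simp [hdc, hdt, hi]
  have hAdc : A.mulVec dc = 0 := by
    have hmem1 : A.mulVec dc ∈ Submodule.span ℝ (Aᵀ '' τᶜ) := by
      refine mulVec_mem_span_cols A _ _ (fun i hi => ?_)
      simp only [Set.mem_compl_iff, not_not] at hi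
      simp [hdc, hi]
    have hmem2 : A.mulVec dc ∈ Submodule.span ℝ (Aᵀ '' τ) := by
      have hdt' : A.mulVec dt ∈ Submodule.span ℝ (Aᵀ '' τ) := by
        refine mulVec_mem_span_cols A _ _ (fun i hi => ?_)
        simp [hdt, hi]
      have heq : A.mulVec dc = -(A.mulVec dt) := by
        have h := hAd
        rw [hsplit, Matrix.mulVec_add] at h
        exact eq_neg_of_add_eq_zero_right h
      rw [heq]
      exact Submodule.neg_mem _ hdt'
    have : A.mulVec dc ∈ Submodule.span ℝ (Aᵀ '' τ) ⊓ Submodule.span ℝ (Aᵀ '' τᶜ) :=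
      ⟨hmem2, hmem1⟩
    rw [hsep] at this
    simpa using this
  have hdcj : dc j = 0 := by simp [hdc, hjτ]
  have hMdc : M.mulVec dc = 0 := by
    rw [hMv dc, hdcj, hAdc]; simp
  -- orthogonality
  have hperp1 : x ⬝ᵥ dc = 0 := by
    rw [hx]; exact pinv_mulVec_perp_ker A Ap h2 h4 b dc hAdc
  have hperp2 : x' ⬝ᵥ dc = 0 := by
    rw [hx']; exact pinv_mulVec_perp_ker M Bp hb2 hb4 b dc hMdc
  have hdd : (x' - x) ⬝ᵥ dc = 0 := by
    rw [sub_dotProduct, hperp1, hperp2, sub_zero]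
  have hdcdc : dc ⬝ᵥ dc = 0 := by
    rw [← hdd]
    refine Finset.sum_congr rfl (fun i _ => ?_)
    by_cases hi : i ∈ τ <;> simp [hdc, hi]
  intro i hi
  have hzero : dc i = 0 := by
    have hnn : ∀ k ∈ Finset.univ, 0 ≤ dc k * dc k := fun k _ => mul_self_nonneg _
    have := (Finset.sum_eq_zero_iff_of_nonneg hnn).mp hdcdc i (Finset.mem_univ i)
    exact mul_self_eq_zero.mp this
  have : (x' - x) i = 0 := by
    rw [hdc] at hzero
    simpa [hi] using hzero
  have := sub_eq_zero.mp this
  rw [this]
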